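/- Assume the observation-driven model where the support of Y_t is a subset of the non-negative integers ℕ₀, the function g satisfies the contraction condition with a + b < 1, and {(X_t,Y_t), t ∈ ℤ} is in its stationary regime. Define g_1 = g and g_k(x, y_1,…,y_k) = g_{k−1}(g(x, y_k), y_1,…,y_{k−1}) for k ≥ 2, so that X_t = g_k(X_{t−k}, Y_{t−1},…,Y_{t−k}). Then E|X_t − g_k(0, Y_{t−1},…,Y_{t−k})| ≤ a^k · E X_{t−k} for every k ≥ 1, and consequently there exists a measurable function g_∞ : ℕ₀^∞ → [0,∞) such that X_t = g_∞(Y_{t−1}, Y_{t−2}, …) almost surely. -/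
import Mathlib


open scoped ENNReal

open MeasureTheory ProbabilityTheory Filter

/-- The one-parameter exponential family distribution with natural parameter `η`:
the measure with density `y ↦ exp (η y − A η) * h y` with respect to the base measure `μ`. -/
noncomputable def expFam (μ : Measure ℝ) (A h : ℝ → ℝ) (η : ℝ) : Measure ℝ :=
  μ.withDensity fun y => ENNReal.ofReal (Real.exp (η * y - A η) * h y)

/-- The iterated update maps: `gIter g k x ys = g_k (x, ys 1, …, ys k)` where `g_1 = g`
and `g_k (x, y_1, …, y_k) = g_{k−1} (g (x, y_k), y_1, …, y_{k−1})`. -/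
def gIter (g : ℝ → ℝ → ℝ) : ℕ → ℝ → (ℕ → ℝ) → ℝ
  | 0, x, _ => x
  | k + 1, x, ys => gIter g k (g x (ys (k + 1))) ys

lemma gIter_congr (g : ℝ → ℝ → ℝ) : ∀ (k : ℕ) (x : ℝ) (ys ys' : ℕ → ℝ),
    (∀ j, 1 ≤ j → j ≤ k → ys j = ys' j) → gIter g k x ys = gIter g k x ys'
  | 0, _, _, _, _ => rfl
  | k+1, x, ys, ys', h => by
      simp only [gIter]
      rw [h (k+1) (by omega) le_rfl]
      exact gIter_congr g k _ ys ys' fun j h1 h2 => h j h1 (by omega)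

lemma gIter_nonneg {g : ℝ → ℝ → ℝ} (hgnn : ∀ x y, 0 ≤ x → 0 ≤ y → 0 ≤ g x y) :
    ∀ (k : ℕ) (x : ℝ) (ys : ℕ → ℝ), 0 ≤ x → (∀ j, 0 ≤ ys j) → 0 ≤ gIter g k x ys
  | 0, _, _, hx, _ => hx
  | k+1, x, ys, hx, hys =>
      gIter_nonneg hgnn k _ ys (hgnn _ _ hx (hys _)) hys

lemma gIter_contract {g : ℝ → ℝ → ℝ} {a b : ℝ} (ha : 0 ≤ a)
    (hcontr : ∀ x x' y y' : ℝ, 0 ≤ x → 0 ≤ x' → 0 ≤ y → 0 ≤ y' →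
      |g x y - g x' y'| ≤ a * |x - x'| + b * |y - y'|)
    (hgnn : ∀ x y, 0 ≤ x → 0 ≤ y → 0 ≤ g x y) :
    ∀ (k : ℕ) (x x' : ℝ) (ys : ℕ → ℝ), 0 ≤ x → 0 ≤ x' → (∀ j, 0 ≤ ys j) →
      |gIter g k x ys - gIter g k x' ys| ≤ a ^ k * |x - x'|
  | 0, x, x', ys, _, _, _ => by simp [gIter]
  | k+1, x, x', ys, hx, hx', hys => by
      simp only [gIter]
      calc |gIter g k (g x (ys (k+1))) ys - gIter g k (g x' (ys (k+1))) ys|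
          ≤ a ^ k * |g x (ys (k+1)) - g x' (ys (k+1))| :=
            gIter_contract ha hcontr hgnn k _ _ ys (hgnn _ _ hx (hys _))
              (hgnn _ _ hx' (hys _)) hys
        _ ≤ a ^ k * (a * |x - x'| + b * |ys (k+1) - ys (k+1)|) :=
            mul_le_mul_of_nonneg_left (hcontr _ _ _ _ hx hx' (hys _) (hys _))
              (pow_nonneg ha k)
        _ = a ^ (k+1) * |x - x'| := by rw [sub_self, abs_zero]; ring

lemma gIter_eq_max {g : ℝ → ℝ → ℝ} (hgnn : ∀ x y, 0 ≤ x → 0 ≤ y → 0 ≤ g x y) :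
    ∀ (k : ℕ) (x : ℝ) (ys : ℕ → ℝ), 0 ≤ x → (∀ j, 0 ≤ ys j) →
      gIter g k x ys = gIter (fun x y => g (max x 0) (max y 0)) k x ys
  | 0, _, _, _, _ => rfl
  | k+1, x, ys, hx, hys => by
      simp only [gIter]
      rw [max_eq_left hx, max_eq_left (hys (k+1))]
      exact gIter_eq_max hgnn k _ ys (hgnn _ _ hx (hys _)) hys

lemma gIter_meas {Ω' : Type*} [MeasurableSpace Ω'] (G : ℝ → ℝ → ℝ)
    (hG : Measurable fun p : ℝ × ℝ => G p.1 p.2) :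
    ∀ (k : ℕ) (F : Ω' → ℝ) (v : Ω' → ℕ → ℝ), Measurable F →
      (∀ j, Measurable fun ω => v ω j) →
      Measurable fun ω => gIter G k (F ω) (v ω)
  | 0, _, _, hF, _ => hF
  | k+1, F, v, hF, hv => by
      simp only [gIter]
      exact gIter_meas G hG k _ v (hG.comp (hF.prodMk (hv (k+1)))) hv

/-- for the stationary observation-driven model with count observations,
`E |X_t − g_k (0, Y_{t−1}, …, Y_{t−k})| ≤ aᵏ E X_{t−k}` for every `k ≥ 1`; consequently
there is a measurable `g_∞ : ℕ₀^∞ → [0,∞)` with `X_t = g_∞ (Y_{t−1}, Y_{t−2}, …)` a.s. -/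
theorem stmt6 {Ω : Type*} [MeasurableSpace Ω] (P : Measure Ω) [IsProbabilityMeasure P]
    (μ : Measure ℝ) [SigmaFinite μ] (A hden B : ℝ → ℝ)
    (hB : StrictMono B) (hAB : ∀ η, HasDerivAt A (B η) η)
    (g : ℝ → ℝ → ℝ) (a b : ℝ) (ha : 0 ≤ a) (hb : 0 ≤ b) (hab : a + b < 1)
    (hcontr : ∀ x x' y y' : ℝ, 0 ≤ x → 0 ≤ x' → 0 ≤ y → 0 ≤ y' →
      |g x y - g x' y'| ≤ a * |x - x'| + b * |y - y'|)
    (hgnn : ∀ x y, 0 ≤ x → 0 ≤ y → 0 ≤ g x y)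
    (X : ℤ → Ω → ℝ) (Y : ℤ → Ω → ℕ)
    (hXmeas : ∀ t, Measurable (X t)) (hYmeas : ∀ t, Measurable (Y t))
    (hXnn : ∀ t ω, 0 ≤ X t ω)
    -- the recursion `X_t = g (X_{t−1}, Y_{t−1})`
    (hrec : ∀ t : ℤ, ∀ ω, X t ω = g (X (t - 1) ω) (Y (t - 1) ω))
    -- the conditional distribution of `Y_t` given the past is the exponential family
    -- member with mean `X_t`
    (hcdist : ∀ t : ℤ, ∀ᵐ ω ∂P,
      condDistrib (fun ω' => (Y t ω' : ℝ)) (fun ω' => fun j : ℕ => Y (t - 1 - j) ω') P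
          ((fun j : ℕ => Y (t - 1 - j) ω)) =
        expFam μ A hden (Function.invFun B (X t ω)))
    -- stationary regime
    (hstat : Measure.map (fun ω => fun t : ℤ => (X (t + 1) ω, Y (t + 1) ω)) P =
      Measure.map (fun ω => fun t : ℤ => (X t ω, Y t ω)) P)
    (hint : ∀ t, Integrable (X t) P) :
    (∀ k : ℕ, 1 ≤ k → ∀ t : ℤ,
      ∫ ω, |X t ω - gIter g k 0 (fun j => (Y (t - j) ω : ℝ))| ∂P ≤
        a ^ k * ∫ ω, X (t - k) ω ∂P) ∧
    ∃ ginf : (ℕ → ℕ) → ℝ, Measurable ginf ∧ (∀ v, 0 ≤ ginf v) ∧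
      ∀ t : ℤ, ∀ᵐ ω ∂P, X t ω = ginf fun j => Y (t - 1 - j) ω := by
  classical
  have ha1 : a < 1 := by linarith
  set G : ℝ → ℝ → ℝ := fun x y => g (max x 0) (max y 0) with hGdef
  have hGm : Measurable fun p : ℝ × ℝ => G p.1 p.2 := by
    have hlip : LipschitzWith 1 (fun p : ℝ × ℝ => G p.1 p.2) := by
      apply LipschitzWith.of_dist_le_mul
      intro p q
      have h1 : |G p.1 p.2 - G q.1 q.2| ≤ a * |p.1 - q.1| + b * |p.2 - q.2| := by
        calc |G p.1 p.2 - G q.1 q.2|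
            ≤ a * |max p.1 0 - max q.1 0| + b * |max p.2 0 - max q.2 0| :=
              hcontr _ _ _ _ (le_max_right _ _) (le_max_right _ _)
                (le_max_right _ _) (le_max_right _ _)
          _ ≤ a * |p.1 - q.1| + b * |p.2 - q.2| :=
              add_le_add (mul_le_mul_of_nonneg_left (abs_max_sub_max_le_abs _ _ _) ha)
                (mul_le_mul_of_nonneg_left (abs_max_sub_max_le_abs _ _ _) hb)
      have hd1 : |p.1 - q.1| ≤ dist p q := by
        rw [← Real.dist_eq, Prod.dist_eq]; exact le_max_left _ _
      have hd2 : |p.2 - q.2| ≤ dist p q := by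
        rw [← Real.dist_eq, Prod.dist_eq]; exact le_max_right _ _
      rw [Real.dist_eq]
      have hd0 : (0:ℝ) ≤ dist p q := dist_nonneg
      push_cast
      nlinarith
    exact hlip.continuous.measurable
  have hcast : Measurable (Nat.cast : ℕ → ℝ) := measurable_from_top
  have hZm : ∀ (k : ℕ) (t : ℤ),
      Measurable fun ω => gIter g k 0 (fun j => (Y (t - j) ω : ℝ)) := by
    intro k t
    have he : (fun ω => gIter g k 0 (fun j => (Y (t - j) ω : ℝ)))
        = fun ω => gIter G k 0 (fun j => (Y (t - j) ω : ℝ)) :=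
      funext fun ω => gIter_eq_max hgnn k 0 _ le_rfl (fun j => Nat.cast_nonneg _)
    rw [he]
    exact gIter_meas G hGm k _ _ measurable_const (fun j => hcast.comp (hYmeas _))
  have hrep : ∀ (k : ℕ) (t : ℤ) (ω : Ω),
      X t ω = gIter g k (X (t - (k : ℤ)) ω) (fun j => (Y (t - j) ω : ℝ)) := by
    intro k
    induction k with
    | zero => intro t ω; simp [gIter]
    | succ k ih =>
      intro t ω
      have key : g (X (t - ((k+1 : ℕ) : ℤ)) ω) ((Y (t - ((k+1 : ℕ) : ℤ)) ω : ℝ))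
          = X (t - (k : ℤ)) ω := by
        have h2 := hrec (t - (k : ℤ)) ω
        have e : t - (k : ℤ) - 1 = t - ((k+1 : ℕ) : ℤ) := by push_cast; ring
        rw [e] at h2
        exact h2.symm
      simp only [gIter]
      rw [key]
      exact ih t ω
  have hptw : ∀ (k : ℕ) (t : ℤ) (ω : Ω),
      |X t ω - gIter g k 0 (fun j => (Y (t - j) ω : ℝ))| ≤ a ^ k * X (t - (k : ℤ)) ω := by
    intro k t ω
    have h := gIter_contract ha hcontr hgnn k (X (t - (k : ℤ)) ω) 0
      (fun j => (Y (t - j) ω : ℝ)) (hXnn _ _) le_rfl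
      (fun j => Nat.cast_nonneg (Y (t - j) ω))
    rw [← hrep k t ω] at h
    simpa [sub_zero, abs_of_nonneg (hXnn _ _)] using h
  have hZint : ∀ (k : ℕ) (t : ℤ),
      Integrable (fun ω => |X t ω - gIter g k 0 (fun j => (Y (t - j) ω : ℝ))|) P := by
    intro k t
    refine Integrable.mono ((hint (t - (k : ℤ))).const_mul (a ^ k)) ?_ ?_
    · exact ((hXmeas t).sub (hZm k t)).abs.aestronglyMeasurable
    · refine Filter.Eventually.of_forall fun ω => ?_
      rw [Real.norm_eq_abs, Real.norm_eq_abs, abs_abs]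
      exact le_trans (hptw k t ω) (le_abs_self _)
  constructor
  · intro k _ t
    calc ∫ ω, |X t ω - gIter g k 0 (fun j => (Y (t - j) ω : ℝ))| ∂P
        ≤ ∫ ω, a ^ k * X (t - (k : ℤ)) ω ∂P :=
          integral_mono (hZint k t) ((hint _).const_mul _) (hptw k t)
      _ = a ^ k * ∫ ω, X (t - (k : ℤ)) ω ∂P := integral_const_mul _ _
  -- part 2
  have hΦ : Measurable (fun ω => fun s : ℤ => (X s ω, Y s ω)) :=
    measurable_pi_lambda _ fun s => ((hXmeas s).prodMk (hYmeas s))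
  have hΦ' : Measurable (fun ω => fun s : ℤ => (X (s+1) ω, Y (s+1) ω)) :=
    measurable_pi_lambda _ fun s => ((hXmeas _).prodMk (hYmeas _))
  have hshift : ∀ s : ℤ, ∫ ω, X (s+1) ω ∂P = ∫ ω, X s ω ∂P := by
    intro s
    have he : Measurable (fun f : ℤ → ℝ × ℕ => (f s).1) :=
      measurable_fst.comp (measurable_pi_apply s)
    calc ∫ ω, X (s+1) ω ∂P
        = ∫ f, (f s).1 ∂(Measure.map (fun ω => fun u : ℤ => (X (u+1) ω, Y (u+1) ω)) P) := by
          rw [integral_map hΦ'.aemeasurable he.aestronglyMeasurable]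
      _ = ∫ f, (f s).1 ∂(Measure.map (fun ω => fun u : ℤ => (X u ω, Y u ω)) P) := by
          rw [hstat]
      _ = ∫ ω, X s ω ∂P := by
          rw [integral_map hΦ.aemeasurable he.aestronglyMeasurable]
  have hconst : ∀ (t : ℤ) (k : ℕ), ∫ ω, X (t - (k : ℤ)) ω ∂P = ∫ ω, X t ω ∂P := by
    intro t k
    induction k with
    | zero => norm_num
    | succ k ih =>
      have h1 := hshift (t - ((k+1 : ℕ) : ℤ))
      have h2 : (t - ((k+1 : ℕ) : ℤ)) + 1 = t - (k : ℤ) := by push_cast; ring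
      rw [h2] at h1
      rw [← ih, ← h1]
  refine ⟨fun v => (limsup (fun k => ENNReal.ofReal
      (gIter g k 0 (fun j => ((v (j-1) : ℕ) : ℝ)))) atTop).toReal,
    ?_, fun v => ENNReal.toReal_nonneg, ?_⟩
  · refine Measurable.ennreal_toReal (Measurable.limsup fun k => Measurable.ennreal_ofReal ?_)
    have he : (fun v : ℕ → ℕ => gIter g k 0 (fun j => ((v (j-1) : ℕ) : ℝ)))
        = fun v : ℕ → ℕ => gIter G k 0 (fun j => ((v (j-1) : ℕ) : ℝ)) :=
      funext fun v => gIter_eq_max hgnn k 0 _ le_rfl fun j => Nat.cast_nonneg _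
    rw [he]
    exact gIter_meas G hGm k _ _ measurable_const fun j => hcast.comp (measurable_pi_apply _)
  · intro t
    have hlb : ∀ k : ℕ,
        ∫⁻ ω, ENNReal.ofReal |X t ω - gIter g k 0 (fun j => (Y (t - j) ω : ℝ))| ∂P
          ≤ ENNReal.ofReal (a ^ k) * ENNReal.ofReal (∫ ω, X t ω ∂P) := by
      intro k
      calc ∫⁻ ω, ENNReal.ofReal |X t ω - gIter g k 0 (fun j => (Y (t - j) ω : ℝ))| ∂P
          ≤ ∫⁻ ω, ENNReal.ofReal (a ^ k * X (t - (k : ℤ)) ω) ∂P :=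
            lintegral_mono fun ω => ENNReal.ofReal_le_ofReal (hptw k t ω)
        _ = ∫⁻ ω, ENNReal.ofReal (a ^ k) * ENNReal.ofReal (X (t - (k : ℤ)) ω) ∂P := by
            simp_rw [ENNReal.ofReal_mul (pow_nonneg ha k)]
        _ = ENNReal.ofReal (a ^ k) * ∫⁻ ω, ENNReal.ofReal (X (t - (k : ℤ)) ω) ∂P :=
            lintegral_const_mul _ ((hXmeas _).ennreal_ofReal)
        _ = ENNReal.ofReal (a ^ k) * ENNReal.ofReal (∫ ω, X (t - (k : ℤ)) ω ∂P) := by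
            rw [← ofReal_integral_eq_lintegral_ofReal (hint _)
              (Filter.Eventually.of_forall (hXnn _))]
        _ = ENNReal.ofReal (a ^ k) * ENNReal.ofReal (∫ ω, X t ω ∂P) := by
            rw [hconst t k]
    have hm : ∀ k : ℕ, Measurable fun ω =>
        ENNReal.ofReal |X t ω - gIter g k 0 (fun j => (Y (t - j) ω : ℝ))| :=
      fun k => (((hXmeas t).sub (hZm k t)).abs).ennreal_ofReal
    have hts : ∑' k : ℕ,
        ∫⁻ ω, ENNReal.ofReal |X t ω - gIter g k 0 (fun j => (Y (t - j) ω : ℝ))| ∂P ≠ ⊤ := by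
      apply ne_top_of_le_ne_top ?_ (ENNReal.tsum_le_tsum hlb)
      rw [ENNReal.tsum_mul_right]
      refine ENNReal.mul_ne_top ?_ ENNReal.ofReal_ne_top
      simp_rw [ENNReal.ofReal_pow ha]
      rw [ENNReal.tsum_geometric]
      refine ENNReal.inv_ne_top.2 ?_
      have : ENNReal.ofReal a < 1 := by
        rw [show (1 : ℝ≥0∞) = ENNReal.ofReal 1 by simp]
        exact (ENNReal.ofReal_lt_ofReal_iff one_pos).2 ha1
      exact (tsub_pos_iff_lt.2 this).ne'
    have hae : ∀ᵐ ω ∂P, (∑' k : ℕ,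
        ENNReal.ofReal |X t ω - gIter g k 0 (fun j => (Y (t - j) ω : ℝ))|) ≠ ⊤ := by
      refine (ae_lt_top (Measurable.ennreal_tsum hm) ?_).mono fun ω h => h.ne
      rw [lintegral_tsum fun k => (hm k).aemeasurable]
      exact hts
    filter_upwards [hae] with ω hω
    have h0 : Tendsto (fun k =>
        ENNReal.ofReal |X t ω - gIter g k 0 (fun j => (Y (t - j) ω : ℝ))|) atTop (nhds 0) :=
      ENNReal.tendsto_atTop_zero_of_tsum_ne_top hω
    have h1 : Tendsto (fun k =>
        |X t ω - gIter g k 0 (fun j => (Y (t - j) ω : ℝ))|) atTop (nhds 0) := by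
      have h1' := (ENNReal.tendsto_toReal (by simp : (0:ℝ≥0∞) ≠ ⊤)).comp h0
      have he : (fun k => (ENNReal.ofReal
          |X t ω - gIter g k 0 (fun j => (Y (t - j) ω : ℝ))|).toReal)
          = fun k => |X t ω - gIter g k 0 (fun j => (Y (t - j) ω : ℝ))| :=
        funext fun k => ENNReal.toReal_ofReal (abs_nonneg _)
      rw [Function.comp_def, he] at h1'
      exact h1'
    have h2 : Tendsto (fun k => gIter g k 0 (fun j => (Y (t - j) ω : ℝ))) atTop
        (nhds (X t ω)) := by
      have h3 : Tendsto (fun k =>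
          X t ω - gIter g k 0 (fun j => (Y (t - j) ω : ℝ))) atTop (nhds 0) :=
        (tendsto_zero_iff_abs_tendsto_zero _).2 h1
      have h4 := (tendsto_const_nhds (x := X t ω) (f := atTop)).sub h3
      simpa using h4
    have h5 : Tendsto (fun k =>
        ENNReal.ofReal (gIter g k 0 (fun j => (Y (t - j) ω : ℝ)))) atTop
        (nhds (ENNReal.ofReal (X t ω))) :=
      (ENNReal.continuous_ofReal.tendsto _).comp h2
    have h6 : limsup (fun k =>
        ENNReal.ofReal (gIter g k 0 (fun j => (Y (t - j) ω : ℝ)))) atTop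
        = ENNReal.ofReal (X t ω) := h5.limsup_eq
    have hagree : ∀ k : ℕ,
        gIter g k 0 (fun j => ((Y (t - 1 - ((j-1 : ℕ) : ℤ)) ω : ℕ) : ℝ))
          = gIter g k 0 (fun j => (Y (t - j) ω : ℝ)) := by
      intro k
      apply gIter_congr
      intro j h1 _
      have e : t - 1 - ((j-1 : ℕ) : ℤ) = t - (j : ℤ) := by omega
      rw [e]
    show X t ω = (limsup (fun k => ENNReal.ofReal
        (gIter g k 0 (fun j => ((Y (t - 1 - ((j-1 : ℕ) : ℤ)) ω : ℕ) : ℝ)))) atTop).toReal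
    have he2 : (fun k => ENNReal.ofReal
        (gIter g k 0 (fun j => ((Y (t - 1 - ((j-1 : ℕ) : ℤ)) ω : ℕ) : ℝ))))
        = fun k => ENNReal.ofReal (gIter g k 0 (fun j => (Y (t - j) ω : ℝ))) :=
      funext fun k => by rw [hagree k]
    rw [he2, h6, ENNReal.toReal_ofReal (hXnn t ω)]
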